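/- Define on the vector space with basis {L_m : m ≥ −1} ∪ {Y_p : p ∈ ℤ + 1/2, p ≥ −1/2} ∪ {M_n : n ≥ 0} the brackets [L_m, L_n] = (m−n)L_{m+n}, [L_m, M_n] = ((2a−3)(m+1) − n)M_{m+n} + 2b M_{m+n+1}, [L_m, Y_p] = ((a−1)(m+1) − (p+1/2))Y_{m+p} + b Y_{m+p+1}, [Y_p, Y_q] = (p−q)M_{p+q}, [Y_p, M_n] = [M_m, M_n] = 0 (indices out of range understood as 0). Then these brackets satisfy the Jacobi identity. -/

import Mathlib

noncomputable section

/-- Index set of the annihilation algebra `Lie(TSV(a,b))⁺`: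
`L_m` for `m ∈ ℤ`, `m ≥ -1`; `Y_p` for `p ∈ ℤ + 1/2`, `p ≥ -1/2`, encoded by
`q ∈ ℤ`, `q ≥ -1` with `p = q + 1/2`; and `M_n` for `n ∈ ℤ`, `n ≥ 0`. -/
inductive TIdx : Type
  | l : {m : ℤ // -1 ≤ m} → TIdx
  | y : {q : ℤ // -1 ≤ q} → TIdx
  | mm : {n : ℤ // 0 ≤ n} → TIdx
  deriving DecidableEq

/-- The underlying vector space, with basis
`{L_m : m ≥ -1} ∪ {Y_p : p ≥ -1/2} ∪ {M_n : n ≥ 0}`. -/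
abbrev TSp : Type := TIdx →₀ ℂ

/-- The basis vector `L_m` (interpreted as `0` when `m < -1`). -/
def Lgen (m : ℤ) : TSp := if h : -1 ≤ m then Finsupp.single (TIdx.l ⟨m, h⟩) 1 else 0

/-- The basis vector `Y_{q+1/2}` (interpreted as `0` when `q < -1`). -/
def Ygen (q : ℤ) : TSp := if h : -1 ≤ q then Finsupp.single (TIdx.y ⟨q, h⟩) 1 else 0

/-- The basis vector `M_n` (interpreted as `0` when `n < 0`). -/
def Mgen (n : ℤ) : TSp := if h : 0 ≤ n then Finsupp.single (TIdx.mm ⟨n, h⟩) 1 else 0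

/-- The bracket on basis elements (with `Y_p` encoded by `q = p − 1/2`):
`[L_m, L_n] = (m−n)L_{m+n}`,
`[L_m, M_n] = ((2a−3)(m+1) − n)M_{m+n} + 2b·M_{m+n+1}`,
`[L_m, Y_p] = ((a−1)(m+1) − (p+1/2))Y_{m+p} + b·Y_{m+p+1}`,
`[Y_p, Y_q] = (p−q)M_{p+q}`, `[Y_p, M_n] = [M_m, M_n] = 0`,
indices out of range understood as `0`. -/
def brT (a b : ℂ) : TIdx → TIdx → TSp
  | TIdx.l m, TIdx.l n => (((m.1 : ℂ) - (n.1 : ℂ))) • Lgen (m.1 + n.1)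
  | TIdx.l m, TIdx.mm n =>
      ((2 * a - 3) * ((m.1 : ℂ) + 1) - (n.1 : ℂ)) • Mgen (m.1 + n.1)
        + (2 * b) • Mgen (m.1 + n.1 + 1)
  | TIdx.mm n, TIdx.l m =>
      -(((2 * a - 3) * ((m.1 : ℂ) + 1) - (n.1 : ℂ)) • Mgen (m.1 + n.1)
        + (2 * b) • Mgen (m.1 + n.1 + 1))
  | TIdx.l m, TIdx.y q =>
      ((a - 1) * ((m.1 : ℂ) + 1) - ((q.1 : ℂ) + 1)) • Ygen (m.1 + q.1)
        + b • Ygen (m.1 + q.1 + 1)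
  | TIdx.y q, TIdx.l m =>
      -(((a - 1) * ((m.1 : ℂ) + 1) - ((q.1 : ℂ) + 1)) • Ygen (m.1 + q.1)
        + b • Ygen (m.1 + q.1 + 1))
  | TIdx.y p, TIdx.y q => (((p.1 : ℂ) - (q.1 : ℂ))) • Mgen (p.1 + q.1 + 1)
  | TIdx.y _, TIdx.mm _ => 0
  | TIdx.mm _, TIdx.y _ => 0
  | TIdx.mm _, TIdx.mm _ => 0

/-- The bilinear extension of the bracket to the whole space. -/
def bracketT (a b : ℂ) (x y : TSp) : TSp :=
  x.sum fun i c => y.sum fun j d => (c * d) • brT a b i j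

section
variable (a b : ℂ)

lemma bracketT_zero_left (y : TSp) : bracketT a b 0 y = 0 := by
  simp [bracketT]

lemma bracketT_zero_right (x : TSp) : bracketT a b x 0 = 0 := by
  simp [bracketT]

lemma bracketT_add_left (x x' y : TSp) :
    bracketT a b (x + x') y = bracketT a b x y + bracketT a b x' y := by
  unfold bracketT
  rw [Finsupp.sum_add_index']
  · intro i; simp
  · intro i c1 c2; simp only [add_mul, add_smul]; rw [Finsupp.sum_add]

lemma bracketT_add_right (x y y' : TSp) :
    bracketT a b x (y + y') = bracketT a b x y + bracketT a b x y' := by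
  unfold bracketT
  rw [← Finsupp.sum_add]
  apply Finsupp.sum_congr
  intro i _
  rw [Finsupp.sum_add_index']
  · intro j; simp
  · intro j d1 d2; simp only [mul_add, add_smul]

lemma bracketT_smul_left (r : ℂ) (x y : TSp) :
    bracketT a b (r • x) y = r • bracketT a b x y := by
  unfold bracketT
  rw [Finsupp.sum_smul_index', Finsupp.smul_sum]
  · apply Finsupp.sum_congr
    intro i _
    rw [Finsupp.smul_sum]
    apply Finsupp.sum_congr
    intro j _
    rw [smul_eq_mul, smul_smul]
    ring_nf
  · intro i; simp

lemma bracketT_smul_right (r : ℂ) (x y : TSp) :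
    bracketT a b x (r • y) = r • bracketT a b x y := by
  unfold bracketT
  rw [Finsupp.smul_sum]
  apply Finsupp.sum_congr
  intro i _
  rw [Finsupp.sum_smul_index', Finsupp.smul_sum]
  · apply Finsupp.sum_congr
    intro j _
    rw [smul_eq_mul, smul_smul]
    ring_nf
  · intro j; simp

lemma bracketT_neg_right (x y : TSp) : bracketT a b x (-y) = - bracketT a b x y := by
  rw [← neg_one_smul ℂ y, bracketT_smul_right, neg_one_smul]

lemma bracketT_single_single (i j : TIdx) :
    bracketT a b (Finsupp.single i 1) (Finsupp.single j 1) = brT a b i j := by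
  simp [bracketT, Finsupp.sum_single_index]

end
section
variable (a b : ℂ)

lemma Lgen_of_le {m : ℤ} (h : -1 ≤ m) : Lgen m = Finsupp.single (TIdx.l ⟨m, h⟩) 1 := dif_pos h
lemma Ygen_of_le {q : ℤ} (h : -1 ≤ q) : Ygen q = Finsupp.single (TIdx.y ⟨q, h⟩) 1 := dif_pos h
lemma Mgen_of_le {n : ℤ} (h : 0 ≤ n) : Mgen n = Finsupp.single (TIdx.mm ⟨n, h⟩) 1 := dif_pos h
lemma Lgen_of_lt {m : ℤ} (h : m < -1) : Lgen m = 0 := dif_neg (by omega)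
lemma Ygen_of_lt {q : ℤ} (h : q < -1) : Ygen q = 0 := dif_neg (by omega)
lemma Mgen_of_lt {n : ℤ} (h : n < 0) : Mgen n = 0 := dif_neg (by omega)

lemma br_LL {m n : ℤ} (hm : -1 ≤ m) (hn : -1 ≤ n) :
    bracketT a b (Lgen m) (Lgen n) = ((m : ℂ) - (n : ℂ)) • Lgen (m + n) := by
  rw [Lgen_of_le hm, Lgen_of_le hn, bracketT_single_single]; rfl

lemma br_LY {m q : ℤ} (hm : -1 ≤ m) (hq : -1 ≤ q) :
    bracketT a b (Lgen m) (Ygen q) =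
      ((a - 1) * ((m : ℂ) + 1) - ((q : ℂ) + 1)) • Ygen (m + q) + b • Ygen (m + q + 1) := by
  rw [Lgen_of_le hm, Ygen_of_le hq, bracketT_single_single]; rfl

lemma br_YL {q m : ℤ} (hq : -1 ≤ q) (hm : -1 ≤ m) :
    bracketT a b (Ygen q) (Lgen m) =
      -(((a - 1) * ((m : ℂ) + 1) - ((q : ℂ) + 1)) • Ygen (m + q) + b • Ygen (m + q + 1)) := by
  rw [Lgen_of_le hm, Ygen_of_le hq, bracketT_single_single]; rfl

lemma br_LM {m n : ℤ} (hm : -1 ≤ m) (hn : 0 ≤ n) :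
    bracketT a b (Lgen m) (Mgen n) =
      ((2 * a - 3) * ((m : ℂ) + 1) - (n : ℂ)) • Mgen (m + n) + (2 * b) • Mgen (m + n + 1) := by
  rw [Lgen_of_le hm, Mgen_of_le hn, bracketT_single_single]; rfl

lemma br_ML {n m : ℤ} (hn : 0 ≤ n) (hm : -1 ≤ m) :
    bracketT a b (Mgen n) (Lgen m) =
      -(((2 * a - 3) * ((m : ℂ) + 1) - (n : ℂ)) • Mgen (m + n) + (2 * b) • Mgen (m + n + 1)) := by
  rw [Lgen_of_le hm, Mgen_of_le hn, bracketT_single_single]; rfl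

lemma br_YY {p q : ℤ} (hp : -1 ≤ p) (hq : -1 ≤ q) :
    bracketT a b (Ygen p) (Ygen q) = ((p : ℂ) - (q : ℂ)) • Mgen (p + q + 1) := by
  rw [Ygen_of_le hp, Ygen_of_le hq, bracketT_single_single]; rfl

lemma br_YM (p n : ℤ) : bracketT a b (Ygen p) (Mgen n) = 0 := by
  unfold Ygen Mgen
  split_ifs <;>
    simp only [bracketT_single_single, bracketT_zero_left, bracketT_zero_right, brT]

lemma br_MY (n p : ℤ) : bracketT a b (Mgen n) (Ygen p) = 0 := by
  unfold Ygen Mgen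
  split_ifs <;>
    simp only [bracketT_single_single, bracketT_zero_left, bracketT_zero_right, brT]

lemma br_MM (m n : ℤ) : bracketT a b (Mgen m) (Mgen n) = 0 := by
  unfold Mgen
  split_ifs <;>
    simp only [bracketT_single_single, bracketT_zero_left, bracketT_zero_right, brT]

end
section
variable (a b : ℂ)

lemma brLL2 {m n k : ℤ} (hm : -1 ≤ m) (hn : -1 ≤ n) (hk : -1 ≤ k) :
    bracketT a b (Lgen m) (bracketT a b (Lgen n) (Lgen k)) =
      (((n : ℂ) - k) * ((m : ℂ) - n - k)) • Lgen (m + n + k) := by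
  rw [br_LL a b hn hk, bracketT_smul_right]
  by_cases h : -1 ≤ n + k
  · rw [br_LL a b hm h, smul_smul, show m + (n + k) = m + n + k by ring]
    congr 1; push_cast; ring
  · have hn1 : n = -1 := by omega
    have hk1 : k = -1 := by omega
    subst hn1; subst hk1
    rw [Lgen_of_lt (by norm_num : (-1 : ℤ) + -1 < -1), bracketT_zero_right, smul_zero]
    norm_num

lemma brYLL2 {q m n : ℤ} (hq : -1 ≤ q) (hm : -1 ≤ m) (hn : -1 ≤ n) :
    bracketT a b (Ygen q) (bracketT a b (Lgen m) (Lgen n)) =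
      ((m : ℂ) - n) •
        (-(((a - 1) * ((m : ℂ) + (n : ℂ) + 1) - ((q : ℂ) + 1)) • Ygen (m + n + q)
          + b • Ygen (m + n + q + 1))) := by
  rw [br_LL a b hm hn, bracketT_smul_right]
  by_cases h : -1 ≤ m + n
  · rw [br_YL a b hq h]
    congr 3; push_cast; ring
  · have hm1 : m = -1 := by omega
    have hn1 : n = -1 := by omega
    subst hm1; subst hn1
    rw [Lgen_of_lt (by norm_num : (-1 : ℤ) + -1 < -1), bracketT_zero_right, smul_zero]
    norm_num

lemma brLY2 {m n q : ℤ} (hm : -1 ≤ m) (hn : -1 ≤ n) (hq : -1 ≤ q) :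
    bracketT a b (Lgen m) (bracketT a b (Lgen n) (Ygen q)) =
      ((a - 1) * ((n : ℂ) + 1) - ((q : ℂ) + 1)) •
        (((a - 1) * ((m : ℂ) + 1) - ((n : ℂ) + (q : ℂ) + 1)) • Ygen (m + n + q)
          + b • Ygen (m + n + q + 1))
      + b • (((a - 1) * ((m : ℂ) + 1) - ((n : ℂ) + (q : ℂ) + 2)) • Ygen (m + n + q + 1)
          + b • Ygen (m + n + q + 2)) := by
  rw [br_LY a b hn hq, bracketT_add_right, bracketT_smul_right, bracketT_smul_right]
  congr 1
  · by_cases h : -1 ≤ n + q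
    · rw [br_LY a b hm h, show m + (n + q) = m + n + q by ring]
      congr 3; push_cast; ring
    · have hn1 : n = -1 := by omega
      have hq1 : q = -1 := by omega
      subst hn1; subst hq1
      rw [Ygen_of_lt (by norm_num : (-1 : ℤ) + -1 < -1), bracketT_zero_right, smul_zero]
      norm_num
  · rw [br_LY a b hm (by omega : -1 ≤ n + q + 1), show m + (n + q + 1) = m + n + q + 1 by ring,
      show m + n + q + 1 + 1 = m + n + q + 2 by ring]
    congr 3; push_cast; ring

lemma brLM2 {m n k : ℤ} (hm : -1 ≤ m) (hn : -1 ≤ n) (hk : 0 ≤ k) :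
    bracketT a b (Lgen m) (bracketT a b (Lgen n) (Mgen k)) =
      ((2 * a - 3) * ((n : ℂ) + 1) - (k : ℂ)) •
        (((2 * a - 3) * ((m : ℂ) + 1) - ((n : ℂ) + (k : ℂ))) • Mgen (m + n + k)
          + (2 * b) • Mgen (m + n + k + 1))
      + (2 * b) • (((2 * a - 3) * ((m : ℂ) + 1) - ((n : ℂ) + (k : ℂ) + 1)) • Mgen (m + n + k + 1)
          + (2 * b) • Mgen (m + n + k + 2)) := by
  rw [br_LM a b hn hk, bracketT_add_right, bracketT_smul_right, bracketT_smul_right]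
  congr 1
  · by_cases h : 0 ≤ n + k
    · rw [br_LM a b hm h, show m + (n + k) = m + n + k by ring]
      congr 3; push_cast; ring
    · have hn1 : n = -1 := by omega
      have hk1 : k = 0 := by omega
      subst hn1; subst hk1
      rw [Mgen_of_lt (by norm_num : (-1 : ℤ) + 0 < 0), bracketT_zero_right, smul_zero]
      norm_num
  · rw [br_LM a b hm (by omega : 0 ≤ n + k + 1), show m + (n + k + 1) = m + n + k + 1 by ring,
      show m + n + k + 1 + 1 = m + n + k + 2 by ring]
    congr 3; push_cast; ring

lemma brMLL2 {k m n : ℤ} (hk : 0 ≤ k) (hm : -1 ≤ m) (hn : -1 ≤ n) :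
    bracketT a b (Mgen k) (bracketT a b (Lgen m) (Lgen n)) =
      ((m : ℂ) - n) •
        (-(((2 * a - 3) * ((m : ℂ) + (n : ℂ) + 1) - (k : ℂ)) • Mgen (m + n + k)
          + (2 * b) • Mgen (m + n + k + 1))) := by
  rw [br_LL a b hm hn, bracketT_smul_right]
  by_cases h : -1 ≤ m + n
  · rw [br_ML a b hk h]
    congr 3; push_cast; ring
  · have hm1 : m = -1 := by omega
    have hn1 : n = -1 := by omega
    subst hm1; subst hn1
    rw [Lgen_of_lt (by norm_num : (-1 : ℤ) + -1 < -1), bracketT_zero_right, smul_zero]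
    norm_num

lemma brLYY2 {m p q : ℤ} (hm : -1 ≤ m) (hp : -1 ≤ p) (hq : -1 ≤ q) :
    bracketT a b (Lgen m) (bracketT a b (Ygen p) (Ygen q)) =
      ((p : ℂ) - q) •
        (((2 * a - 3) * ((m : ℂ) + 1) - ((p : ℂ) + (q : ℂ) + 1)) • Mgen (m + p + q + 1)
          + (2 * b) • Mgen (m + p + q + 2)) := by
  rw [br_YY a b hp hq, bracketT_smul_right]
  by_cases h : 0 ≤ p + q + 1
  · rw [br_LM a b hm h, show m + (p + q + 1) = m + p + q + 1 by ring,
      show m + p + q + 1 + 1 = m + p + q + 2 by ring]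
    congr 3; push_cast; ring
  · have hp1 : p = -1 := by omega
    have hq1 : q = -1 := by omega
    subst hp1; subst hq1
    rw [Mgen_of_lt (by norm_num : (-1 : ℤ) + -1 + 1 < 0), bracketT_zero_right, smul_zero]
    norm_num

lemma brYLY2 {p m q : ℤ} (hp : -1 ≤ p) (hm : -1 ≤ m) (hq : -1 ≤ q) :
    bracketT a b (Ygen p) (bracketT a b (Lgen m) (Ygen q)) =
      ((a - 1) * ((m : ℂ) + 1) - ((q : ℂ) + 1)) •
        (((p : ℂ) - m - q) • Mgen (m + p + q + 1))
      + b • (((p : ℂ) - m - q - 1) • Mgen (m + p + q + 2)) := by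
  rw [br_LY a b hm hq, bracketT_add_right, bracketT_smul_right, bracketT_smul_right]
  congr 1
  · by_cases h : -1 ≤ m + q
    · rw [br_YY a b hp h, show p + (m + q) + 1 = m + p + q + 1 by ring]
      congr 2; push_cast; ring
    · have hm1 : m = -1 := by omega
      have hq1 : q = -1 := by omega
      subst hm1; subst hq1
      rw [Ygen_of_lt (by norm_num : (-1 : ℤ) + -1 < -1), bracketT_zero_right, smul_zero]
      norm_num
  · rw [br_YY a b hp (by omega : -1 ≤ m + q + 1), show p + (m + q + 1) + 1 = m + p + q + 2 by ring]
    congr 2; push_cast; ring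

end
/-- The cyclic Jacobi sum. -/
def TJ (a b : ℂ) (x y z : TSp) : TSp :=
  bracketT a b x (bracketT a b y z) + bracketT a b y (bracketT a b z x)
    + bracketT a b z (bracketT a b x y)

section
variable (a b : ℂ)

lemma TJ_rot (x y z : TSp) : TJ a b x y z = TJ a b y z x := by
  unfold TJ; abel

lemma jacLLL {m n k : ℤ} (hm : -1 ≤ m) (hn : -1 ≤ n) (hk : -1 ≤ k) :
    TJ a b (Lgen m) (Lgen n) (Lgen k) = 0 := by
  unfold TJ
  rw [brLL2 a b hm hn hk, brLL2 a b hn hk hm, brLL2 a b hk hm hn,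
    show n + k + m = m + n + k by ring, show k + m + n = m + n + k by ring]
  match_scalars
  push_cast; ring

lemma jacLLY {m n q : ℤ} (hm : -1 ≤ m) (hn : -1 ≤ n) (hq : -1 ≤ q) :
    TJ a b (Lgen m) (Lgen n) (Ygen q) = 0 := by
  unfold TJ
  have hskew : bracketT a b (Ygen q) (Lgen m) = - bracketT a b (Lgen m) (Ygen q) := by
    rw [br_YL a b hq hm, br_LY a b hm hq]
  rw [hskew, bracketT_neg_right, brLY2 a b hm hn hq, brLY2 a b hn hm hq,
    brYLL2 a b hq hm hn, show n + m + q = m + n + q by ring]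
  match_scalars <;> (push_cast; ring)

lemma jacLLM {m n k : ℤ} (hm : -1 ≤ m) (hn : -1 ≤ n) (hk : 0 ≤ k) :
    TJ a b (Lgen m) (Lgen n) (Mgen k) = 0 := by
  unfold TJ
  have hskew : bracketT a b (Mgen k) (Lgen m) = - bracketT a b (Lgen m) (Mgen k) := by
    rw [br_ML a b hk hm, br_LM a b hm hk]
  rw [hskew, bracketT_neg_right, brLM2 a b hm hn hk, brLM2 a b hn hm hk,
    brMLL2 a b hk hm hn, show n + m + k = m + n + k by ring]
  match_scalars <;> (push_cast; ring)

lemma jacLYY {m p q : ℤ} (hm : -1 ≤ m) (hp : -1 ≤ p) (hq : -1 ≤ q) :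
    TJ a b (Lgen m) (Ygen p) (Ygen q) = 0 := by
  unfold TJ
  have hskew : bracketT a b (Ygen q) (Lgen m) = - bracketT a b (Lgen m) (Ygen q) := by
    rw [br_YL a b hq hm, br_LY a b hm hq]
  rw [hskew, bracketT_neg_right, brLYY2 a b hm hp hq, brYLY2 a b hp hm hq,
    brYLY2 a b hq hm hp,
    show m + q + p + 1 = m + p + q + 1 by ring, show m + q + p + 2 = m + p + q + 2 by ring]
  match_scalars <;> (push_cast; ring)

end
section
variable (a b : ℂ)

lemma brT_skew (i j : TIdx) : brT a b i j = - brT a b j i := by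
  cases i <;> cases j <;> simp only [brT, neg_neg, neg_zero]
  case l.l m n =>
    rw [show (n.1 + m.1 : ℤ) = m.1 + n.1 from add_comm _ _, ← neg_smul]
    congr 1; ring
  case y.y p q =>
    rw [show (q.1 + p.1 + 1 : ℤ) = p.1 + q.1 + 1 by ring, ← neg_smul]
    congr 1; ring

lemma bracketT_skew (x y : TSp) : bracketT a b x y = - bracketT a b y x := by
  induction x using Finsupp.induction_linear with
  | zero => simp [bracketT_zero_left, bracketT_zero_right]
  | add f g hf hg => rw [bracketT_add_left, hf, hg, bracketT_add_right, neg_add]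
  | single i c =>
    induction y using Finsupp.induction_linear with
    | zero => simp [bracketT_zero_left, bracketT_zero_right]
    | add f g hf hg => rw [bracketT_add_right, hf, hg, bracketT_add_left, neg_add]
    | single j d =>
      rw [show (Finsupp.single i c : TSp) = c • Finsupp.single i 1 by
            rw [Finsupp.smul_single, smul_eq_mul, mul_one],
          show (Finsupp.single j d : TSp) = d • Finsupp.single j 1 by
            rw [Finsupp.smul_single, smul_eq_mul, mul_one],
          bracketT_smul_left, bracketT_smul_right, bracketT_smul_left, bracketT_smul_right,
          bracketT_single_single, bracketT_single_single, brT_skew]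
      module

lemma TJ_zero₁ (y z : TSp) : TJ a b 0 y z = 0 := by
  simp [TJ, bracketT_zero_left, bracketT_zero_right]

lemma TJ_zero₂ (x z : TSp) : TJ a b x 0 z = 0 := by
  simp [TJ, bracketT_zero_left, bracketT_zero_right]

lemma TJ_zero₃ (x y : TSp) : TJ a b x y 0 = 0 := by
  simp [TJ, bracketT_zero_left, bracketT_zero_right]

lemma TJ_add₁ (x x' y z : TSp) : TJ a b (x + x') y z = TJ a b x y z + TJ a b x' y z := by
  unfold TJ; simp only [bracketT_add_left, bracketT_add_right]; abel

lemma TJ_add₂ (x y y' z : TSp) : TJ a b x (y + y') z = TJ a b x y z + TJ a b x y' z := by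
  unfold TJ; simp only [bracketT_add_left, bracketT_add_right]; abel

lemma TJ_add₃ (x y z z' : TSp) : TJ a b x y (z + z') = TJ a b x y z + TJ a b x y z' := by
  unfold TJ; simp only [bracketT_add_left, bracketT_add_right]; abel

lemma TJ_smul₁ (c : ℂ) (x y z : TSp) : TJ a b (c • x) y z = c • TJ a b x y z := by
  unfold TJ; simp only [bracketT_smul_left, bracketT_smul_right, smul_add]

lemma TJ_smul₂ (c : ℂ) (x y z : TSp) : TJ a b x (c • y) z = c • TJ a b x y z := by
  unfold TJ; simp only [bracketT_smul_left, bracketT_smul_right, smul_add]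

lemma TJ_smul₃ (c : ℂ) (x y z : TSp) : TJ a b x y (c • z) = c • TJ a b x y z := by
  unfold TJ; simp only [bracketT_smul_left, bracketT_smul_right, smul_add]

lemma TJ_single (i j k : TIdx) :
    TJ a b (Finsupp.single i 1) (Finsupp.single j 1) (Finsupp.single k 1) = 0 := by
  obtain ⟨m, hm⟩ | ⟨m, hm⟩ | ⟨m, hm⟩ := i <;>
    obtain ⟨n, hn⟩ | ⟨n, hn⟩ | ⟨n, hn⟩ := j <;>
    obtain ⟨k', hk⟩ | ⟨k', hk⟩ | ⟨k', hk⟩ := k <;>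
    simp only [← Lgen_of_le, ← Ygen_of_le, ← Mgen_of_le]
  case l.l.l =>
    exact jacLLL a b hm hn hk
  case l.l.y =>
    exact jacLLY a b hm hn hk
  case l.l.mm =>
    exact jacLLM a b hm hn hk
  case l.y.l =>
    rw [TJ_rot, TJ_rot]; exact jacLLY a b hk hm hn
  case l.y.y =>
    exact jacLYY a b hm hn hk
  case l.y.mm =>
    simp [TJ, br_LL, br_LY, br_YL, br_LM, br_ML, br_YY, br_YM, br_MY, br_MM,
          bracketT_zero_right, bracketT_smul_right, bracketT_add_right, bracketT_neg_right,
          hm, hn, hk]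
  case l.mm.l =>
    rw [TJ_rot, TJ_rot]; exact jacLLM a b hk hm hn
  case l.mm.y =>
    simp [TJ, br_LL, br_LY, br_YL, br_LM, br_ML, br_YY, br_YM, br_MY, br_MM,
          bracketT_zero_right, bracketT_smul_right, bracketT_add_right, bracketT_neg_right,
          hm, hn, hk]
  case l.mm.mm =>
    simp [TJ, br_LL, br_LY, br_YL, br_LM, br_ML, br_YY, br_YM, br_MY, br_MM,
          bracketT_zero_right, bracketT_smul_right, bracketT_add_right, bracketT_neg_right,
          hm, hn, hk]
  case y.l.l =>
    rw [TJ_rot]; exact jacLLY a b hn hk hm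
  case y.l.y =>
    rw [TJ_rot]; exact jacLYY a b hn hk hm
  case y.l.mm =>
    simp [TJ, br_LL, br_LY, br_YL, br_LM, br_ML, br_YY, br_YM, br_MY, br_MM,
          bracketT_zero_right, bracketT_smul_right, bracketT_add_right, bracketT_neg_right,
          hm, hn, hk]
  case y.y.l =>
    rw [TJ_rot, TJ_rot]; exact jacLYY a b hk hm hn
  case y.y.y =>
    simp [TJ, br_LL, br_LY, br_YL, br_LM, br_ML, br_YY, br_YM, br_MY, br_MM,
          bracketT_zero_right, bracketT_smul_right, bracketT_add_right, bracketT_neg_right,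
          hm, hn, hk]
  case y.y.mm =>
    simp [TJ, br_LL, br_LY, br_YL, br_LM, br_ML, br_YY, br_YM, br_MY, br_MM,
          bracketT_zero_right, bracketT_smul_right, bracketT_add_right, bracketT_neg_right,
          hm, hn, hk]
  case y.mm.l =>
    simp [TJ, br_LL, br_LY, br_YL, br_LM, br_ML, br_YY, br_YM, br_MY, br_MM,
          bracketT_zero_right, bracketT_smul_right, bracketT_add_right, bracketT_neg_right,
          hm, hn, hk]
  case y.mm.y =>
    simp [TJ, br_LL, br_LY, br_YL, br_LM, br_ML, br_YY, br_YM, br_MY, br_MM,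
          bracketT_zero_right, bracketT_smul_right, bracketT_add_right, bracketT_neg_right,
          hm, hn, hk]
  case y.mm.mm =>
    simp [TJ, br_LL, br_LY, br_YL, br_LM, br_ML, br_YY, br_YM, br_MY, br_MM,
          bracketT_zero_right, bracketT_smul_right, bracketT_add_right, bracketT_neg_right,
          hm, hn, hk]
  case mm.l.l =>
    rw [TJ_rot]; exact jacLLM a b hn hk hm
  case mm.l.y =>
    simp [TJ, br_LL, br_LY, br_YL, br_LM, br_ML, br_YY, br_YM, br_MY, br_MM,
          bracketT_zero_right, bracketT_smul_right, bracketT_add_right, bracketT_neg_right,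
          hm, hn, hk]
  case mm.l.mm =>
    simp [TJ, br_LL, br_LY, br_YL, br_LM, br_ML, br_YY, br_YM, br_MY, br_MM,
          bracketT_zero_right, bracketT_smul_right, bracketT_add_right, bracketT_neg_right,
          hm, hn, hk]
  case mm.y.l =>
    simp [TJ, br_LL, br_LY, br_YL, br_LM, br_ML, br_YY, br_YM, br_MY, br_MM,
          bracketT_zero_right, bracketT_smul_right, bracketT_add_right, bracketT_neg_right,
          hm, hn, hk]
  case mm.y.y =>
    simp [TJ, br_LL, br_LY, br_YL, br_LM, br_ML, br_YY, br_YM, br_MY, br_MM,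
          bracketT_zero_right, bracketT_smul_right, bracketT_add_right, bracketT_neg_right,
          hm, hn, hk]
  case mm.y.mm =>
    simp [TJ, br_LL, br_LY, br_YL, br_LM, br_ML, br_YY, br_YM, br_MY, br_MM,
          bracketT_zero_right, bracketT_smul_right, bracketT_add_right, bracketT_neg_right,
          hm, hn, hk]
  case mm.mm.l =>
    simp [TJ, br_LL, br_LY, br_YL, br_LM, br_ML, br_YY, br_YM, br_MY, br_MM,
          bracketT_zero_right, bracketT_smul_right, bracketT_add_right, bracketT_neg_right,
          hm, hn, hk]
  case mm.mm.y =>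
    simp [TJ, br_LL, br_LY, br_YL, br_LM, br_ML, br_YY, br_YM, br_MY, br_MM,
          bracketT_zero_right, bracketT_smul_right, bracketT_add_right, bracketT_neg_right,
          hm, hn, hk]
  case mm.mm.mm =>
    simp [TJ, br_LL, br_LY, br_YL, br_LM, br_ML, br_YY, br_YM, br_MY, br_MM,
          bracketT_zero_right, bracketT_smul_right, bracketT_add_right, bracketT_neg_right,
          hm, hn, hk]

end
section
variable (a b : ℂ)

lemma TJ_eq_zero (x y z : TSp) : TJ a b x y z = 0 := by
  induction x using Finsupp.induction_linear with
  | zero => exact TJ_zero₁ a b y z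
  | add f g hf hg => rw [TJ_add₁, hf, hg, add_zero]
  | single i c =>
    induction y using Finsupp.induction_linear with
    | zero => exact TJ_zero₂ a b _ z
    | add f g hf hg => rw [TJ_add₂, hf, hg, add_zero]
    | single j d =>
      induction z using Finsupp.induction_linear with
      | zero => exact TJ_zero₃ a b _ _
      | add f g hf hg => rw [TJ_add₃, hf, hg, add_zero]
      | single k e =>
        rw [show (Finsupp.single i c : TSp) = c • Finsupp.single i 1 by
              rw [Finsupp.smul_single, smul_eq_mul, mul_one],
            show (Finsupp.single j d : TSp) = d • Finsupp.single j 1 by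
              rw [Finsupp.smul_single, smul_eq_mul, mul_one],
            show (Finsupp.single k e : TSp) = e • Finsupp.single k 1 by
              rw [Finsupp.smul_single, smul_eq_mul, mul_one],
            TJ_smul₁, TJ_smul₂, TJ_smul₃, TJ_single, smul_zero, smul_zero, smul_zero]

end


/-- the brackets of the annihilation algebra of `TSV(a,b)`
satisfy the Jacobi identity (in Leibniz form). -/
theorem stmt16 (a b : ℂ) (x y z : TSp) :
    bracketT a b x (bracketT a b y z) =
      bracketT a b (bracketT a b x y) z + bracketT a b y (bracketT a b x z) := by
  have hJ : TJ a b x y z = 0 := TJ_eq_zero a b x y z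
  unfold TJ at hJ
  rw [bracketT_skew a b (bracketT a b x y) z, bracketT_skew a b x z, bracketT_neg_right]
  rw [add_assoc, add_eq_zero_iff_eq_neg] at hJ
  rw [hJ]
  abel

end
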